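/- Let n, r ≥ 0 and s ≥ 1 be integers, a < b real numbers, a < τ_1 < … < τ_n < b, and 0 ≤ j ≤ s−1. Let P_{n,r,s,b,j} be the unique polynomial of degree at most 2n+r+s−1 satisfying P^{(k)}(a) = 0 for k = 0, …, r−1, P(τ_k) = P'(τ_k) = 0 for k = 1, …, n, and P^{(k)}(b)/k! = δ_{kj}/j! for k = 0, …, s−1. Then (−1)^j P_{n,r,s,b,j}(t) ≥ 0 for all t ∈ [a, b]; that is, P_{n,r,s,b,j} has constant sign (−1)^j on [a, b]. -/

import Mathlib

open Polynomial Finset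

private lemma RLS.iteratedDeriv_eval (p : Polynomial ℝ) (k : ℕ) (x : ℝ) :
    iteratedDeriv k (fun t => p.eval t) x = (derivative^[k] p).eval x := by
  induction k generalizing x with
  | zero => simp
  | succ k ih =>
    rw [iteratedDeriv_succ, Function.iterate_succ_apply']
    have : iteratedDeriv k (fun t => p.eval t) = fun y => (derivative^[k] p).eval y :=
      funext fun y => ih y
    rw [this, Polynomial.deriv]

private lemma RLS.eval_iter_deriv_pow_mul (q : Polynomial ℝ) (x : ℝ) (J m : ℕ) :
    (derivative^[m] ((X - C x) ^ J * q)).eval x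
      = (m.choose J : ℝ) * (J.factorial : ℝ) * ((derivative^[m - J] q).eval x) := by
  rw [Polynomial.iterate_derivative_mul, Polynomial.eval_finset_sum]
  rw [Finset.sum_eq_single (m - J)]
  · rcases le_or_gt J m with hJm | hJm
    · have h1 : m - (m - J) = J := by omega
      rw [h1, Polynomial.iterate_derivative_X_sub_pow_self, eval_smul, eval_mul]
      have h2 : m.choose (m - J) = m.choose J := Nat.choose_symm hJm
      simp only [h2, smul_eq_mul, eval_mul, eval_natCast]
      push_cast
      ring
    · have h1 : m - J = 0 := by omega
      rw [h1]
      have h2 : m.choose J = 0 := Nat.choose_eq_zero_of_lt hJm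
      rw [h2]
      simp only [Nat.sub_zero, Polynomial.iterate_derivative_X_sub_pow, eval_smul, eval_mul,
        smul_eq_mul, eval_pow, eval_sub, eval_X, eval_C, sub_self]
      rw [zero_pow (by omega : J - m ≠ 0)]
      push_cast
      ring
  · intro i hi hne
    rw [Polynomial.iterate_derivative_X_sub_pow]
    simp only [eval_smul, eval_mul, smul_eq_mul, eval_pow, eval_sub, eval_X, eval_C, sub_self,
      smul_mul_assoc]
    have hi' : i ≤ m := Nat.lt_succ_iff.mp (Finset.mem_range.mp hi)
    rcases lt_or_ge (m - i) J with h | h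
    · rw [zero_pow (by omega : J - (m - i) ≠ 0)]
      simp
    · have : m - i ≠ J := by omega
      have : J < m - i := by omega
      rw [Nat.descFactorial_eq_zero_iff_lt.mpr this]
      simp
  · intro h
    exact absurd (Finset.mem_range.mpr (by omega)) h

private lemma RLS.pow_dvd_of_derivs (q : Polynomial ℝ) (x : ℝ) (m : ℕ)
    (h : ∀ i < m, (derivative^[i] q).eval x = 0) : (X - C x) ^ m ∣ q := by
  induction m with
  | zero => simpa using one_dvd q
  | succ m ih =>
    obtain ⟨W, hW⟩ := ih fun i hi => h i (hi.trans (Nat.lt_succ_self m))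
    have hm := h m (Nat.lt_succ_self m)
    rw [hW, RLS.eval_iter_deriv_pow_mul] at hm
    simp only [Nat.choose_self, Nat.cast_one, one_mul, Nat.sub_self,
      Function.iterate_zero, id] at hm
    have hWx : W.eval x = 0 := by
      rcases mul_eq_zero.mp hm with h' | h'
      · exact absurd h' (Nat.cast_ne_zero.mpr m.factorial_ne_zero)
      · exact h'
    obtain ⟨V, hV⟩ := (Polynomial.dvd_iff_isRoot).mpr hWx
    exact ⟨V, by rw [hW, hV, pow_succ, mul_assoc]⟩

private lemma RLS.sum_rootMultiplicity_le (q : Polynomial ℝ) (hq : q ≠ 0) (F : Finset ℝ) :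
    ∑ x ∈ F, rootMultiplicity x q ≤ q.natDegree := by
  classical
  have h1 : ∑ x ∈ F, rootMultiplicity x q = ∑ x ∈ F ∩ q.roots.toFinset, rootMultiplicity x q := by
    refine (Finset.sum_subset Finset.inter_subset_left ?_).symm
    intro x hxF hx
    have hxr : x ∉ q.roots.toFinset := fun hmem => hx (Finset.mem_inter.mpr ⟨hxF, hmem⟩)
    rw [Multiset.mem_toFinset, Polynomial.mem_roots hq] at hxr
    exact Polynomial.rootMultiplicity_eq_zero fun hr => hxr hr
  rw [h1]
  calc ∑ x ∈ F ∩ q.roots.toFinset, rootMultiplicity x q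
      ≤ ∑ x ∈ q.roots.toFinset, rootMultiplicity x q :=
        Finset.sum_le_sum_of_subset Finset.inter_subset_right
    _ = ∑ x ∈ q.roots.toFinset, q.roots.count x := by
        refine Finset.sum_congr rfl fun x _ => ?_
        rw [Polynomial.count_roots]
    _ = Multiset.card q.roots := Multiset.toFinset_sum_count_eq _
    _ ≤ q.natDegree := Polynomial.card_roots' q

private lemma RLS.rolle_finset (q : Polynomial ℝ) (F : Finset ℝ) (hF : F.Nonempty)
    (hroot : ∀ x ∈ F, q.eval x = 0) :
    ∃ F' : Finset ℝ, F'.card + 1 = F.card ∧ (∀ y ∈ F', (derivative q).eval y = 0) ∧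
      ∀ y ∈ F', y ∉ F ∧ y < F.max' hF := by
  classical
  generalize hN : F.card = N
  induction N using Nat.strong_induction_on generalizing F with
  | _ N ihN =>
  subst hN
  set x := F.max' hF with hxdef
  have hxF : x ∈ F := F.max'_mem hF
  rcases Finset.eq_empty_or_nonempty (F.erase x) with h2 | h2
  · refine ⟨∅, ?_, by simp, by simp⟩
    have : F = {x} := by
      apply Finset.eq_singleton_iff_unique_mem.mpr
      exact ⟨hxF, fun y hy => by
        by_contra hne
        exact (Finset.notMem_empty y) (h2 ▸ Finset.mem_erase.mpr ⟨hne, hy⟩)⟩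
    simp [this]
  · set F₂ := F.erase x with hF₂def
    set x₂ := F₂.max' h2 with hx₂def
    have hx₂F₂ : x₂ ∈ F₂ := F₂.max'_mem h2
    have hx₂F : x₂ ∈ F := Finset.mem_of_mem_erase hx₂F₂
    have hx₂x : x₂ < x :=
      lt_of_le_of_ne (F.le_max' _ hx₂F) (Finset.mem_erase.mp hx₂F₂).1
    obtain ⟨y, hy, hy0⟩ := exists_hasDerivAt_eq_zero hx₂x
      ((q.continuous.continuousOn : ContinuousOn (fun t => q.eval t) _))
      (by rw [hroot _ hx₂F, hroot _ hxF])
      (fun z _ => q.hasDerivAt z)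
    have hcard₂ : F₂.card + 1 = F.card := by
      rw [hF₂def, Finset.card_erase_of_mem hxF]
      have : 1 ≤ F.card := Finset.card_pos.mpr hF
      omega
    obtain ⟨F₂', hc', hr', hm'⟩ := ihN F₂.card (by omega) F₂ h2
      (fun z hz => hroot z (Finset.mem_of_mem_erase hz)) rfl
    have hmax₂ : F₂.max' h2 = x₂ := rfl
    have hyF₂' : y ∉ F₂' := fun hmem => absurd ((hm' y hmem).2) (by
      rw [hmax₂]; exact not_lt.mpr (le_of_lt hy.1))
    refine ⟨insert y F₂', ?_, ?_, ?_⟩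
    · rw [Finset.card_insert_of_notMem hyF₂', hc']
      omega
    · intro z hz
      rcases Finset.mem_insert.mp hz with rfl | hz'
      · exact hy0
      · exact hr' z hz'
    · intro z hz
      rcases Finset.mem_insert.mp hz with rfl | hz'
      · constructor
        · intro hzF
          have hne : z ≠ x := ne_of_lt hy.2
          have : z ∈ F₂ := Finset.mem_erase.mpr ⟨hne, hzF⟩
          exact absurd (F₂.le_max' z this) (not_le.mpr (hmax₂ ▸ hy.1))
        · exact hy.2
      · obtain ⟨hzF₂, hzlt⟩ := hm' z hz'
        have hzx₂ : z < x₂ := hmax₂ ▸ hzlt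
        constructor
        · intro hzF
          exact hzF₂ (Finset.mem_erase.mpr ⟨ne_of_lt (hzx₂.trans hx₂x), hzF⟩)
        · exact hzx₂.trans hx₂x

private lemma RLS.isCoprime_X_sub_C {x y : ℝ} (h : x ≠ y) :
    IsCoprime (X - C x : Polynomial ℝ) (X - C y) := by
  refine ⟨C ((y - x)⁻¹), -C ((y - x)⁻¹), ?_⟩
  have hy : y - x ≠ 0 := sub_ne_zero.mpr (Ne.symm h)
  have : (C ((y - x)⁻¹) : Polynomial ℝ) * (X - C x) + -C ((y - x)⁻¹) * (X - C y)
      = C ((y - x)⁻¹) * (C y - C x) := by ring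
  rw [this, ← C_sub, ← C_mul, inv_mul_cancel₀ hy, C_1]

/-- the Lagrange–Hermite polynomial `P_{n,r,s,b,j}` associated with the
`j`-th derivative at `b` (vanishing to order `r` at `a`, doubly at each `τ_k`, and with
`P^{(k)}(b)/k! = δ_{kj}/j!` for `k = 0,…,s-1`) has constant sign `(-1)^j` on `[a,b]`. -/
theorem right_lagrange_sign
    (n r s : ℕ) (hs : 1 ≤ s) (a b : ℝ) (hab : a < b)
    (τ : ℕ → ℝ)
    (hτab : ∀ k < n, τ k ∈ Set.Ioo a b)
    (hτmono : ∀ i k, i < k → k < n → τ i < τ k)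
    (j : ℕ) (hj : j ≤ s - 1)
    (p : Polynomial ℝ) (hdeg : p.natDegree + 1 ≤ 2 * n + r + s)
    (ha : ∀ k < r, iteratedDeriv k (fun t => p.eval t) a = 0)
    (hτ0 : ∀ k < n, p.eval (τ k) = 0)
    (hτ1 : ∀ k < n, deriv (fun t => p.eval t) (τ k) = 0)
    (hb : ∀ k < s, iteratedDeriv k (fun t => p.eval t) b / (k.factorial : ℝ)
        = (if k = j then 1 else 0) / (j.factorial : ℝ)) :
    ∀ t ∈ Set.Icc a b, 0 ≤ (-1 : ℝ) ^ j * p.eval t := by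
  classical
  have hD : ∀ k x, iteratedDeriv k (fun t => p.eval t) x = (derivative^[k] p).eval x :=
    fun k x => RLS.iteratedDeriv_eval p k x
  have hjs : j < s := by omega
  set u : ℕ := s - 1 - j with hu
  have hsu : s = j + u + 1 := by omega
  have hb' : ∀ k < s, (derivative^[k] p).eval b = if k = j then 1 else 0 := by
    intro k hk
    have h1 := hb k hk
    rw [hD] at h1
    have hf : (k.factorial : ℝ) ≠ 0 := Nat.cast_ne_zero.mpr k.factorial_ne_zero
    by_cases hkj : k = j
    · subst hkj
      rw [if_pos rfl] at h1 ⊢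
      field_simp at h1
      exact h1
    · rw [if_neg hkj] at h1 ⊢
      rw [zero_div] at h1
      exact (div_eq_zero_iff.mp h1).resolve_right hf
  -- the interpolation points and multiplicities
  set pt : ℕ → ℝ := fun k => if k < n then τ k else if k = n then a else b with hpt
  set μ : ℕ → ℕ := fun k => if k < n then 2 else if k = n then r else j with hμ
  have hptτ : ∀ k, k < n → pt k = τ k := fun k hk => by simp [hpt, hk]
  have hptn : pt n = a := by simp [hpt]
  have hptn1 : pt (n + 1) = b := by
    rw [hpt]; simp only []
    rw [if_neg (by omega), if_neg (by omega)]
  have hμτ : ∀ k, k < n → μ k = 2 := fun k hk => by simp [hμ, hk]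
  have hμn : μ n = r := by simp [hμ]
  have hμn1 : μ (n + 1) = j := by
    rw [hμ]; simp only []
    rw [if_neg (by omega), if_neg (by omega)]
  have hpt_ab : ∀ k < n + 1, a ≤ pt k ∧ pt k < b := by
    intro k hk
    by_cases h : k < n
    · rw [hptτ k h]
      exact ⟨le_of_lt (hτab k h).1, (hτab k h).2⟩
    · have hkn : k = n := by omega
      rw [hkn, hptn]
      exact ⟨le_refl a, hab⟩
  have hptinj : ∀ k < n + 2, ∀ l < n + 2, k ≠ l → pt k ≠ pt l := by
    have key : ∀ k < n + 2, ∀ l < n + 2, k < l → pt k ≠ pt l := by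
      intro k hk l hl hkl
      by_cases hkn : k < n
      · rw [hptτ k hkn]
        by_cases hln : l < n
        · rw [hptτ l hln]
          exact ne_of_lt (hτmono k l hkl hln)
        · by_cases hln' : l = n
          · rw [hln', hptn]
            exact ne_of_gt (hτab k hkn).1
          · have : l = n + 1 := by omega
            rw [this, hptn1]
            exact ne_of_lt (hτab k hkn).2
      · have hkn' : k = n := by omega
        have hln' : l = n + 1 := by omega
        rw [hkn', hptn, hln', hptn1]
        exact ne_of_lt hab
    intro k hk l hl hkl
    rcases Nat.lt_or_ge k l with h | h
    · exact key k hk l hl h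
    · have : l < k := by omega
      exact (key l hl k hk this).symm
  -- p ≠ 0
  have hp0 : p ≠ 0 := by
    intro h0
    have h1 := hb' j hjs
    rw [if_pos rfl, h0] at h1
    simp at h1
  -- divisibility at each interpolation point
  have hdvd : ∀ k < n + 2, (X - C (pt k)) ^ (μ k) ∣ p := by
    intro k hk
    apply RLS.pow_dvd_of_derivs
    intro i hi
    by_cases hkn : k < n
    · rw [hμτ k hkn] at hi
      rw [hptτ k hkn]
      interval_cases i
      · simpa using hτ0 k hkn
      · have h1 := hτ1 k hkn
        rw [Polynomial.deriv] at h1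
        simpa using h1
    · by_cases hkn' : k = n
      · rw [hkn', hμn] at hi
        rw [hkn', hptn]
        have h2 := ha i hi
        rw [hD] at h2
        exact h2
      · have hk1 : k = n + 1 := by omega
        rw [hk1, hμn1] at hi
        rw [hk1, hptn1]
        have h2 := hb' i (by omega)
        rw [if_neg (by omega)] at h2
        exact h2
  -- product divides p
  have hcop : (↑(Finset.range (n + 2)) : Set ℕ).Pairwise
      (Function.onFun IsCoprime fun k => (X - C (pt k)) ^ (μ k)) := by
    intro k hk l hl hkl
    have hk' : k < n + 2 := Finset.mem_range.mp hk
    have hl' : l < n + 2 := Finset.mem_range.mp hl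
    exact (RLS.isCoprime_X_sub_C (hptinj k hk' l hl' hkl)).pow
  have hproddvd : (∏ k ∈ Finset.range (n + 2), (X - C (pt k)) ^ (μ k)) ∣ p :=
    Finset.prod_dvd_of_coprime hcop fun k hk => hdvd k (Finset.mem_range.mp hk)
  set A : Polynomial ℝ := ∏ k ∈ Finset.range (n + 1), (X - C (pt k)) ^ (μ k) with hA
  have hsplitprod : (∏ k ∈ Finset.range (n + 2), (X - C (pt k)) ^ (μ k))
      = A * (X - C b) ^ j := by
    rw [Finset.prod_range_succ, hptn1, hμn1, hA]
  rw [hsplitprod] at hproddvd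
  obtain ⟨R, hRdef⟩ := hproddvd
  set G : Polynomial ℝ := A * R with hG
  have hpfac : p = (X - C b) ^ j * G := by rw [hRdef, hG]; ring
  -- Leibniz evaluation at b
  have hkey : ∀ m : ℕ, (derivative^[m] p).eval b
      = (m.choose j : ℝ) * (j.factorial : ℝ) * ((derivative^[m - j] G).eval b) := by
    intro m
    rw [hpfac]
    exact RLS.eval_iter_deriv_pow_mul G b j m
  have hGb1 : (j.factorial : ℝ) * G.eval b = 1 := by
    have h1 := hkey j
    rw [hb' j hjs, if_pos rfl] at h1
    simp only [Nat.choose_self, Nat.cast_one, one_mul, Nat.sub_self,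
      Function.iterate_zero, id_eq] at h1
    linarith
  have hG0 : G ≠ 0 := by
    intro h0
    rw [h0] at hGb1
    simp at hGb1
  have hAR0 : A * R ≠ 0 := by rw [← hG]; exact hG0
  have hA0 : A ≠ 0 := left_ne_zero_of_mul hAR0
  have hR0 : R ≠ 0 := right_ne_zero_of_mul hAR0
  have hAeval : ∀ t : ℝ, A.eval t = ∏ k ∈ Finset.range (n + 1), (t - pt k) ^ (μ k) := by
    intro t
    rw [hA, Polynomial.eval_prod]
    exact Finset.prod_congr rfl fun k _ => by
      rw [Polynomial.eval_pow, Polynomial.eval_sub, Polynomial.eval_X, Polynomial.eval_C]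
  have hA_nonneg : ∀ t : ℝ, a ≤ t → 0 ≤ A.eval t := by
    intro t hta
    rw [hAeval]
    apply Finset.prod_nonneg
    intro k hk
    have hk' : k < n + 1 := Finset.mem_range.mp hk
    by_cases hkn : k < n
    · rw [hμτ k hkn]
      exact sq_nonneg _
    · have hkn' : k = n := by omega
      rw [hkn', hμn, hptn]
      exact pow_nonneg (sub_nonneg.mpr hta) r
  have hA_posb : 0 < A.eval b := by
    rw [hAeval]
    apply Finset.prod_pos
    intro k hk
    have hk' : k < n + 1 := Finset.mem_range.mp hk
    by_cases hkn : k < n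
    · rw [hμτ k hkn, hptτ k hkn]
      exact pow_pos (sub_pos.mpr (hτab k hkn).2) 2
    · have hkn' : k = n := by omega
      rw [hkn', hμn, hptn]
      exact pow_pos (sub_pos.mpr hab) r
  have hGb_eval : G.eval b = A.eval b * R.eval b := by rw [hG, Polynomial.eval_mul]
  have hfj : (0:ℝ) < (j.factorial : ℝ) := by exact_mod_cast j.factorial_pos
  have hRb : 0 < R.eval b := by
    by_contra hcon
    push_neg at hcon
    rw [hGb_eval] at hGb1
    have hmul : A.eval b * R.eval b ≤ 0 :=
      mul_nonpos_of_nonneg_of_nonpos (le_of_lt hA_posb) hcon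
    nlinarith
  -- the main positivity claim for R
  have hRpos : ∀ t ∈ Set.Icc a b, 0 < R.eval t := by
    by_contra hcon
    push_neg at hcon
    obtain ⟨t1, ht1, ht1le⟩ := hcon
    have hcex : ∃ c, (a ≤ c ∧ c < b) ∧ R.eval c = 0 := by
      rcases eq_or_lt_of_le ht1le with heq | hlt
      · refine ⟨t1, ⟨ht1.1, ?_⟩, heq⟩
        rcases eq_or_lt_of_le ht1.2 with h | h
        · exfalso; rw [h] at heq; exact absurd heq (ne_of_gt hRb)
        · exact h
      · have ht1b : t1 < b := by
          rcases eq_or_lt_of_le ht1.2 with h | h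
          · exfalso; rw [h] at hlt; linarith
          · exact h
        have hIV := intermediate_value_Ioo (le_of_lt ht1b)
          (R.continuous.continuousOn : ContinuousOn (fun t => R.eval t) _)
        have h0mem : (0:ℝ) ∈ Set.Ioo (R.eval t1) (R.eval b) := ⟨hlt, hRb⟩
        obtain ⟨c, hcmem, hceq⟩ := hIV h0mem
        exact ⟨c, ⟨le_of_lt (lt_of_le_of_lt ht1.1 hcmem.1), hcmem.2⟩, hceq⟩
    obtain ⟨c, ⟨hca, hcb⟩, hc0⟩ := hcex
    set F : Finset ℝ := insert c A.roots.toFinset with hF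
    have hmemF : ∀ x ∈ F, (a ≤ x ∧ x < b) ∧ G.eval x = 0 := by
      intro x hx
      rcases Finset.mem_insert.mp hx with rfl | hx'
      · exact ⟨⟨hca, hcb⟩, by rw [hG, Polynomial.eval_mul, hc0, mul_zero]⟩
      · rw [Multiset.mem_toFinset, Polynomial.mem_roots hA0] at hx'
        have hx0 : A.eval x = 0 := hx'
        have hge : a ≤ x ∧ x < b := by
          rw [hAeval] at hx0
          obtain ⟨k, hk, hk0⟩ := Finset.prod_eq_zero_iff.mp hx0
          have hk' : k < n + 1 := Finset.mem_range.mp hk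
          have hxpt : x = pt k := by
            by_cases hμ0 : μ k = 0
            · rw [hμ0, pow_zero] at hk0
              exact absurd hk0 one_ne_zero
            · exact sub_eq_zero.mp ((pow_eq_zero_iff hμ0).mp hk0)
          rw [hxpt]
          exact hpt_ab k hk'
        exact ⟨hge, by rw [hG, Polynomial.eval_mul, hx0, zero_mul]⟩
    -- degrees
    have hdegA : A.natDegree = 2 * n + r := by
      have h0 : A.natDegree = ∑ k ∈ Finset.range (n+1), ((X - C (pt k)) ^ μ k).natDegree := by
        rw [hA]
        exact Polynomial.natDegree_prod _ _
          (fun k _ => pow_ne_zero _ (Polynomial.X_sub_C_ne_zero (pt k)))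
      have h1 : ∑ k ∈ Finset.range (n+1), ((X - C (pt k)) ^ μ k).natDegree
          = ∑ k ∈ Finset.range (n+1), μ k :=
        Finset.sum_congr rfl fun k _ => by
          rw [Polynomial.natDegree_pow, Polynomial.natDegree_X_sub_C, mul_one]
      have h2 : ∑ k ∈ Finset.range (n+1), μ k = 2 * n + r := by
        rw [Finset.sum_range_succ, hμn,
          Finset.sum_congr rfl (fun k hk => hμτ k (Finset.mem_range.mp hk)),
          Finset.sum_const, Finset.card_range, smul_eq_mul]
        omega
      rw [h0, h1, h2]
    have hdegp : p.natDegree = j + G.natDegree := by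
      rw [hpfac, Polynomial.natDegree_mul (pow_ne_zero _ (Polynomial.X_sub_C_ne_zero b)) hG0,
        Polynomial.natDegree_pow, Polynomial.natDegree_X_sub_C, mul_one]
    have hdegG : G.natDegree ≤ 2 * n + r + u := by omega
    have hGc0 : G.eval c = 0 := (hmemF c (Finset.mem_insert_self c _)).2
    have hdegGne : G.natDegree ≠ 0 := by
      intro h
      have hCG := Polynomial.eq_C_of_natDegree_eq_zero h
      rw [hCG, Polynomial.eval_C] at hGc0
      rw [hCG, Polynomial.eval_C, hGc0, mul_zero] at hGb1
      exact zero_ne_one hGb1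
    have hdG0 : derivative G ≠ 0 := fun h =>
      hdegGne (Polynomial.natDegree_eq_zero_of_derivative_eq_zero h)
    -- multiplicity of b as root of G'
    have hDGb : u ≤ rootMultiplicity b (derivative G) := by
      rw [Polynomial.le_rootMultiplicity_iff hdG0]
      apply RLS.pow_dvd_of_derivs
      intro i hi
      rw [← Function.iterate_succ_apply]
      have h1 := hkey (j + (i + 1))
      rw [hb' _ (by omega), if_neg (by omega)] at h1
      have h2 : j + (i + 1) - j = i + 1 := by omega
      rw [h2] at h1
      have hch : (0:ℝ) < ((j + (i + 1)).choose j : ℝ) := by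
        exact_mod_cast Nat.choose_pos (by omega)
      rcases mul_eq_zero.mp h1.symm with h | h
      · exact absurd h (ne_of_gt (mul_pos hch hfj))
      · exact h
    -- Rolle points
    have hFne : F.Nonempty := ⟨c, Finset.mem_insert_self c _⟩
    obtain ⟨F', hF'card, hF'root, hF'mem⟩ :=
      RLS.rolle_finset G F hFne (fun x hx => (hmemF x hx).2)
    have hmaxlt : F.max' hFne < b := (hmemF _ (F.max'_mem hFne)).1.2
    have hbF : b ∉ F := fun h => absurd (hmemF b h).1.2 (lt_irrefl b)
    have hbF' : b ∉ F' := fun h => absurd ((hF'mem b h).2.trans hmaxlt) (lt_irrefl b)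
    have hdisjFF' : Disjoint F F' := Finset.disjoint_right.mpr fun y hy => (hF'mem y hy).1
    have hbFF' : b ∉ F ∪ F' := by
      rw [Finset.mem_union]
      push_neg
      exact ⟨hbF, hbF'⟩
    -- sum of multiplicities of G over F
    have hsplitmul : ∀ x : ℝ, rootMultiplicity x G
        = rootMultiplicity x A + rootMultiplicity x R := by
      intro x
      rw [hG]
      exact Polynomial.rootMultiplicity_mul hAR0
    have hsumA : 2 * n + r ≤ ∑ x ∈ F, rootMultiplicity x A := by
      have h1 : ∑ x ∈ A.roots.toFinset, rootMultiplicity x A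
          ≤ ∑ x ∈ F, rootMultiplicity x A :=
        Finset.sum_le_sum_of_subset (Finset.subset_insert c _)
      have h2 : ∑ x ∈ A.roots.toFinset, rootMultiplicity x A = Multiset.card A.roots := by
        rw [← Multiset.toFinset_sum_count_eq A.roots]
        exact Finset.sum_congr rfl fun x _ => (Polynomial.count_roots A).symm
      have hsplits : A.Splits := by
        rw [hA]
        exact Polynomial.Splits.prod
          (fun k _ => (Polynomial.Splits.X_sub_C _).pow _)
      have hcard : Multiset.card A.roots = A.natDegree :=
        (Polynomial.splits_iff_card_roots).mp hsplits
      omega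
    have hsumR : 1 ≤ ∑ x ∈ F, rootMultiplicity x R := by
      have h1 : 1 ≤ rootMultiplicity c R := (Polynomial.rootMultiplicity_pos hR0).mpr hc0
      have hcF : c ∈ F := Finset.mem_insert_self c _
      exact le_trans h1 (Finset.single_le_sum (f := fun x => rootMultiplicity x R)
        (fun x _ => Nat.zero_le _) hcF)
    have hsumG : 2 * n + r + 1 ≤ ∑ x ∈ F, rootMultiplicity x G := by
      have h1 : ∑ x ∈ F, rootMultiplicity x G
          = (∑ x ∈ F, rootMultiplicity x A) + ∑ x ∈ F, rootMultiplicity x R := by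
        rw [← Finset.sum_add_distrib]
        exact Finset.sum_congr rfl fun x _ => hsplitmul x
      omega
    have hS2 : ∑ x ∈ F, rootMultiplicity x G
        ≤ (∑ x ∈ F, rootMultiplicity x (derivative G)) + F.card := by
      have h1 : ∀ x ∈ F, rootMultiplicity x G ≤ rootMultiplicity x (derivative G) + 1 := by
        intro x hx
        have h2 := Polynomial.derivative_rootMultiplicity_of_root
          (p := G) (t := x) ((hmemF x hx).2)
        omega
      calc ∑ x ∈ F, rootMultiplicity x G
          ≤ ∑ x ∈ F, (rootMultiplicity x (derivative G) + 1) := Finset.sum_le_sum h1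
        _ = _ := by rw [Finset.sum_add_distrib, Finset.sum_const, smul_eq_mul, mul_one]
    have hS3 : F'.card ≤ ∑ y ∈ F', rootMultiplicity y (derivative G) := by
      have h1 : ∀ y ∈ F', 1 ≤ rootMultiplicity y (derivative G) := fun y hy =>
        (Polynomial.rootMultiplicity_pos hdG0).mpr (hF'root y hy)
      calc F'.card = ∑ _y ∈ F', 1 := by rw [Finset.sum_const, smul_eq_mul, mul_one]
        _ ≤ _ := Finset.sum_le_sum h1
    have htotal : (∑ x ∈ F, rootMultiplicity x (derivative G))
        + (∑ y ∈ F', rootMultiplicity y (derivative G))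
        + rootMultiplicity b (derivative G) ≤ (derivative G).natDegree := by
      have h1 := RLS.sum_rootMultiplicity_le (derivative G) hdG0 (insert b (F ∪ F'))
      rw [Finset.sum_insert hbFF', Finset.sum_union hdisjFF'] at h1
      omega
    have hdegdG : (derivative G).natDegree < G.natDegree :=
      Polynomial.natDegree_derivative_lt hdegGne
    omega
  -- endgame: sign of p on [a,b]
  intro t ht
  have hev : p.eval t = (t - b) ^ j * (A.eval t * R.eval t) := by
    rw [hpfac, Polynomial.eval_mul, Polynomial.eval_pow, Polynomial.eval_sub,
      Polynomial.eval_X, Polynomial.eval_C, hG, Polynomial.eval_mul]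
  rw [hev]
  have h1 : (-1:ℝ) ^ j * (t - b) ^ j = (b - t) ^ j := by
    rw [← mul_pow]
    congr 1
    ring
  rw [← mul_assoc, h1]
  have hbt : (0:ℝ) ≤ b - t := by linarith [ht.2]
  exact mul_nonneg (pow_nonneg hbt j)
    (mul_nonneg (hA_nonneg t ht.1) (le_of_lt (hRpos t ht)))
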